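/- Let D be a finite nonempty set of triples (z_m, z_p, y) with z_m ∈ ℝ^{d_m}, z_p ∈ ℝ^{d_p}, y ∈ {−1, +1}. Suppose w_p ∈ ℝ^{d_p}, w_p ≠ 0, satisfies y·⟨w_p, z_p⟩ ≥ 1 for all points of D, and suppose there is a unit vector ε ∈ ℝ^{d_m} such that y·⟨ε, z_m⟩ > 0 for every point with y·⟨w_p, z_p⟩ = 1 (the margin points). Then there exists α ∈ [0, 1) and λ > 0 such that the classifier (w_m′, w_p′) = (λ·√(1 − α²)·‖w_p‖·ε, λ·α·w_p) has ‖(w_m′, w_p′)‖ ≤ ‖(0, w_p)‖ and satisfies y·(⟨w_m′, z_m⟩ + ⟨w_p′, z_p⟩) ≥ 1 for all points of D with strict inequality on the former margin points. In particular, the max-margin classifier over D is not the purely-invariant classifier (0, w_p); its main-task weight block is nonzero. -/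

import Mathlib

set_option maxHeartbeats 1000000 in
theorem max_margin_probe_uses_spurious_features (dm dp : ℕ)
    (D : Finset (EuclideanSpace ℝ (Fin dm) × EuclideanSpace ℝ (Fin dp) × ℝ))
    (hne : D.Nonempty)
    (hlab : ∀ p ∈ D, p.2.2 = 1 ∨ p.2.2 = -1)
    (wp : EuclideanSpace ℝ (Fin dp)) (hwp : wp ≠ 0)
    (hsep : ∀ p ∈ D, p.2.2 * (inner ℝ wp p.2.1 : ℝ) ≥ 1)
    (ε : EuclideanSpace ℝ (Fin dm)) (hε : ‖ε‖ = 1)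
    (hmargin : ∀ p ∈ D, p.2.2 * (inner ℝ wp p.2.1 : ℝ) = 1 →
        p.2.2 * (inner ℝ ε p.1 : ℝ) > 0) :
    ∃ α : ℝ, ∃ lam : ℝ, 0 ≤ α ∧ α < 1 ∧ 0 < lam ∧
      (lam * Real.sqrt (1 - α ^ 2) * ‖wp‖) • ε ≠ 0 ∧
      Real.sqrt (‖(lam * Real.sqrt (1 - α ^ 2) * ‖wp‖) • ε‖ ^ 2 + ‖(lam * α) • wp‖ ^ 2)
        ≤ ‖wp‖ ∧
      (∀ p ∈ D,
        p.2.2 * ((inner ℝ ((lam * Real.sqrt (1 - α ^ 2) * ‖wp‖) • ε) p.1 : ℝ)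
          + (inner ℝ ((lam * α) • wp) p.2.1 : ℝ)) ≥ 1) ∧
      (∀ p ∈ D, p.2.2 * (inner ℝ wp p.2.1 : ℝ) = 1 →
        p.2.2 * ((inner ℝ ((lam * Real.sqrt (1 - α ^ 2) * ‖wp‖) • ε) p.1 : ℝ)
          + (inner ℝ ((lam * α) • wp) p.2.1 : ℝ)) > 1) := by
  classical
  have hWpos : (0:ℝ) < ‖wp‖ := norm_pos_iff.mpr hwp
  set W : ℝ := ‖wp‖ with hWdef
  set M : Finset _ := D.filter (fun p => p.2.2 * (inner ℝ wp p.2.1 : ℝ) = 1) with hMdef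
  set N : Finset _ := D.filter (fun p => p.2.2 * (inner ℝ wp p.2.1 : ℝ) ≠ 1) with hNdef
  set c : ℝ := if h : M.Nonempty then M.inf' h (fun p => p.2.2 * (inner ℝ ε p.1 : ℝ)) else 1
    with hcdef
  have hcpos : 0 < c := by
    rw [hcdef]
    split
    · next h =>
      rw [Finset.lt_inf'_iff]
      intro p hp
      have hp' := Finset.mem_filter.mp hp
      exact hmargin p hp'.1 hp'.2
    · norm_num
  have hcle : ∀ p ∈ D, p.2.2 * (inner ℝ wp p.2.1 : ℝ) = 1 →
      c ≤ p.2.2 * (inner ℝ ε p.1 : ℝ) := by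
    intro p hp hm
    have hpM : p ∈ M := Finset.mem_filter.mpr ⟨hp, hm⟩
    rw [hcdef, dif_pos ⟨p, hpM⟩]
    exact Finset.inf'_le _ hpM
  set δ : ℝ := if h : N.Nonempty then
      N.inf' h (fun p => p.2.2 * (inner ℝ wp p.2.1 : ℝ) - 1) else 1 with hδdef
  have hδpos : 0 < δ := by
    rw [hδdef]
    split
    · next h =>
      rw [Finset.lt_inf'_iff]
      intro p hp
      have hp' := Finset.mem_filter.mp hp
      have := hsep p hp'.1
      have hne1 := hp'.2
      cases lt_or_eq_of_le this with
      | inl h1 => linarith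
      | inr h1 => exact absurd h1.symm hne1
    · norm_num
  have hδle : ∀ p ∈ D, p.2.2 * (inner ℝ wp p.2.1 : ℝ) ≠ 1 →
      1 + δ ≤ p.2.2 * (inner ℝ wp p.2.1 : ℝ) := by
    intro p hp hm
    have hpN : p ∈ N := Finset.mem_filter.mpr ⟨hp, hm⟩
    rw [hδdef, dif_pos ⟨p, hpN⟩]
    have := Finset.inf'_le (fun q => q.2.2 * (inner ℝ wp q.2.1 : ℝ) - 1) hpN
    linarith
  set B : ℝ := D.sup' hne (fun p => ‖p.1‖) with hBdef
  have hB0 : 0 ≤ B := le_trans (norm_nonneg _) (Finset.le_sup' (fun q => ‖q.1‖) hne.choose_spec)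
  have hBle : ∀ p ∈ D, ‖p.1‖ ≤ B := fun p hp => Finset.le_sup' (fun q => ‖q.1‖) hp
  -- bound on u := y * ⟪ε, z_m⟫
  have hu_lb : ∀ p ∈ D, -B ≤ p.2.2 * (inner ℝ ε p.1 : ℝ) := by
    intro p hp
    have hy : |p.2.2| = 1 := by
      rcases hlab p hp with h | h <;> rw [h] <;> norm_num
    have h1 : |p.2.2 * (inner ℝ ε p.1 : ℝ)| ≤ B := by
      rw [abs_mul, hy, one_mul]
      calc |(inner ℝ ε p.1 : ℝ)| ≤ ‖ε‖ * ‖p.1‖ := abs_real_inner_le_norm ε p.1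
        _ = ‖p.1‖ := by rw [hε, one_mul]
        _ ≤ B := hBle p hp
    linarith [neg_abs_le (p.2.2 * (inner ℝ ε p.1 : ℝ))]
  set t : ℝ := min (min ((W*c)^2/2) (δ/(2*(1+δ)))) (δ^2/(8*(W*B+1)^2)) with htdef
  have htpos : 0 < t := by
    apply lt_min (lt_min _ _) _
    · positivity
    · positivity
    · positivity
  have ht1 : t ≤ (W*c)^2/2 := le_trans (min_le_left _ _) (min_le_left _ _)
  have ht2 : t ≤ δ/(2*(1+δ)) := le_trans (min_le_left _ _) (min_le_right _ _)
  have ht3 : t ≤ δ^2/(8*(W*B+1)^2) := min_le_right _ _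
  have htlt1 : t < 1 := by
    have : δ/(2*(1+δ)) < 1 := by
      rw [div_lt_one (by linarith)]
      linarith
    linarith
  -- q = √t, k = √(1 - (1-t)^2)
  set q : ℝ := Real.sqrt t with hqdef
  have hq0 : 0 ≤ q := Real.sqrt_nonneg _
  have hq2 : q^2 = t := Real.sq_sqrt htpos.le
  have hqpos : 0 < q := Real.sqrt_pos.mpr htpos
  set k : ℝ := Real.sqrt (1 - (1-t)^2) with hkdef
  have hk_arg : (0:ℝ) ≤ 1 - (1-t)^2 := by nlinarith
  have hk0 : 0 ≤ k := Real.sqrt_nonneg _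
  have hk2 : k^2 = 1 - (1-t)^2 := Real.sq_sqrt hk_arg
  have hkpos : 0 < k := by
    apply Real.sqrt_pos.mpr
    nlinarith
  have hk_le : k ≤ Real.sqrt 2 * q := by
    have h1 : (1 : ℝ) - (1-t)^2 ≤ 2 * t := by nlinarith
    calc k ≤ Real.sqrt (2*t) := Real.sqrt_le_sqrt h1
      _ = Real.sqrt 2 * q := by rw [hqdef, Real.sqrt_mul (by norm_num)]
  have hk_ge : q ≤ k := by
    apply Real.sqrt_le_sqrt
    nlinarith
  -- key scalar bounds
  have hWc : q < W * c := by
    have hWc2 : 0 < (W*c)^2 := by positivity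
    have h1 : q^2 < (W*c)^2 := by rw [hq2]; linarith
    exact lt_of_pow_lt_pow_left₀ 2 (mul_pos hWpos hcpos).le h1
  have hs2 : Real.sqrt 2 ≤ 3/2 := by
    rw [show (3:ℝ)/2 = Real.sqrt ((3/2)^2) by rw [Real.sqrt_sq]; norm_num]
    apply Real.sqrt_le_sqrt; norm_num
  have hs2pos : (0:ℝ) < Real.sqrt 2 := by positivity
  have hkWB : k * (W * B) ≤ δ/2 := by
    have hq_le : q ≤ δ/(2*Real.sqrt 2*(W*B+1)) := by
      have h1 : q^2 ≤ (δ/(2*Real.sqrt 2*(W*B+1)))^2 := by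
        rw [hq2, div_pow]
        have : (2*Real.sqrt 2*(W*B+1))^2 = 8*(W*B+1)^2 := by
          have := Real.sq_sqrt (show (0:ℝ) ≤ 2 by norm_num)
          ring_nf
          nlinarith [Real.sq_sqrt (show (0:ℝ) ≤ 2 by norm_num)]
        rw [this]
        exact ht3
      have hden : (0:ℝ) < δ/(2*Real.sqrt 2*(W*B+1)) := by positivity
      nlinarith
    have hWB1 : (0:ℝ) < W*B+1 := by nlinarith
    calc k * (W*B) ≤ (Real.sqrt 2 * q) * (W*B+1) := by
          apply mul_le_mul hk_le (by linarith) (by nlinarith) (by positivity)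
      _ ≤ Real.sqrt 2 * (δ/(2*Real.sqrt 2*(W*B+1))) * (W*B+1) := by
          apply mul_le_mul_of_nonneg_right _ hWB1.le
          exact mul_le_mul_of_nonneg_left hq_le hs2pos.le
      _ = δ/2 := by field_simp
  have htδ : t * (1+δ) ≤ δ/2 := by
    rw [le_div_iff₀ (show (0:ℝ) < 2*(1+δ) by linarith)] at ht2
    linarith
  -- the per-point expression
  have hexpr : ∀ p ∈ D,
      p.2.2 * ((inner ℝ ((1 * Real.sqrt (1 - (1-t) ^ 2) * ‖wp‖) • ε) p.1 : ℝ)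
        + (inner ℝ ((1 * (1-t)) • wp) p.2.1 : ℝ))
      = k * W * (p.2.2 * (inner ℝ ε p.1 : ℝ)) + (1-t) * (p.2.2 * (inner ℝ wp p.2.1 : ℝ)) := by
    intro p _
    rw [real_inner_smul_left, real_inner_smul_left]
    ring
  have hmain : ∀ p ∈ D,
      1 ≤ k * W * (p.2.2 * (inner ℝ ε p.1 : ℝ)) + (1-t) * (p.2.2 * (inner ℝ wp p.2.1 : ℝ)) ∧
      (p.2.2 * (inner ℝ wp p.2.1 : ℝ) = 1 →
        1 < k * W * (p.2.2 * (inner ℝ ε p.1 : ℝ)) + (1-t) * (p.2.2 * (inner ℝ wp p.2.1 : ℝ))) := by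
    intro p hp
    by_cases hm : p.2.2 * (inner ℝ wp p.2.1 : ℝ) = 1
    · have hu := hcle p hp hm
      have hstrict : 1 < k * W * (p.2.2 * (inner ℝ ε p.1 : ℝ)) + (1-t) * (p.2.2 * (inner ℝ wp p.2.1 : ℝ)) := by
        rw [hm, mul_one]
        have h1 : q * (W * c) ≤ k * W * c := by nlinarith
        have h2 : t < q * (W * c) := by nlinarith
        have h3 : k * W * c ≤ k * W * (p.2.2 * (inner ℝ ε p.1 : ℝ)) := by
          apply mul_le_mul_of_nonneg_left hu (by positivity)
        linarith
      exact ⟨hstrict.le, fun _ => hstrict⟩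
    · have hs := hδle p hp hm
      have hu := hu_lb p hp
      constructor
      · have h1 : -(k * W * B) ≤ k * W * (p.2.2 * (inner ℝ ε p.1 : ℝ)) := by
          have := mul_le_mul_of_nonneg_left hu (show (0:ℝ) ≤ k * W by positivity)
          linarith [this]
        have h2 : (1-t) * (1+δ) ≤ (1-t) * (p.2.2 * (inner ℝ wp p.2.1 : ℝ)) := by
          apply mul_le_mul_of_nonneg_left hs (by linarith)
        have h3 : k * W * B ≤ δ/2 := by
          have : k * (W * B) = k * W * B := by ring
          linarith [hkWB, this.symm ▸ hkWB]
        nlinarith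
      · intro h; exact absurd h hm
  refine ⟨1 - t, 1, by linarith, by linarith, one_pos, ?_, ?_, ?_, ?_⟩
  · -- nonzero
    apply smul_ne_zero
    · show (1 * Real.sqrt (1 - (1-t)^2) * ‖wp‖) ≠ 0
      rw [one_mul]
      positivity
    · intro h; rw [h] at hε; simp at hε
  · -- norm bound
    have hnε : ‖(1 * Real.sqrt (1 - (1-t) ^ 2) * ‖wp‖) • ε‖ = k * W := by
      rw [norm_smul, hε, mul_one, Real.norm_eq_abs, one_mul, abs_of_nonneg (by positivity)]
    have hnw : ‖((1:ℝ) * (1-t)) • wp‖ = (1-t) * W := by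
      rw [norm_smul, Real.norm_eq_abs, one_mul, abs_of_nonneg (by linarith)]
    rw [hnε, hnw]
    have : (k*W)^2 + ((1-t)*W)^2 = W^2 := by nlinarith
    rw [this, Real.sqrt_sq hWpos.le]
  · intro p hp
    rw [hexpr p hp]
    exact (hmain p hp).1
  · intro p hp hm
    rw [hexpr p hp]
    exact (hmain p hp).2 hm
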